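/- arXiv:1807.11648 — 2 statements merged into one kernel-verified Lean document; each statement's English description precedes it below -/
import Mathlib

section
/- Let 1 ≤ k ≤ d be integers, let A, B ∈ ℝ^{d×d} be positive semidefinite matrices, and let v ∈ ℝ^d satisfy v vᵀ ⪯_k B. Then det_k(A + v vᵀ) ≤ det_k(A + B). In particular, the map A ↦ −det_k(A)^{1/k} is vector k-monotone. -/
/-!
STATEMENT 14: Let 1 ≤ k ≤ d, A, B PSD, and v ∈ ℝ^d with v vᵀ ⪯_k B. Then
det_k(A + v vᵀ) ≤ det_k(A + B). In particular, A ↦ −det_k(A)^{1/k} is vector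
k-monotone.
-/

open Matrix Finset

noncomputable section

/-- The outer product `v vᵀ` as a `d × d` real matrix. -/
def outer {d : ℕ} (v : Fin d → ℝ) : Matrix (Fin d) (Fin d) ℝ := Matrix.vecMulVec v v

/-- The Frobenius (trace) inner product of two real matrices. -/
def frob {d : ℕ} (A B : Matrix (Fin d) (Fin d) ℝ) : ℝ := ∑ i, ∑ j, A i j * B i j

/-- `A ⪯_k B` : `⟨A, Π⟩ ≤ ⟨B, Π⟩` for every orthogonal projection matrix `Π`
(symmetric and idempotent) of rank `d - k + 1`. -/
def PrecK {d : ℕ} (k : ℕ) (A B : Matrix (Fin d) (Fin d) ℝ) : Prop :=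
  ∀ P : Matrix (Fin d) (Fin d) ℝ, P.IsHermitian → P * P = P → P.rank = d - k + 1 →
    frob A P ≤ frob B P

/-- `detk k A` is the sum of all `k × k` principal minors of `A`. -/
def detk {d : ℕ} (k : ℕ) (A : Matrix (Fin d) (Fin d) ℝ) : ℝ :=
  ∑ S ∈ Finset.powersetCard k (Finset.univ : Finset (Fin d)),
    Matrix.det (A.submatrix (fun i : {x // x ∈ S} => (i : Fin d))
      (fun j : {x // x ∈ S} => (j : Fin d)))

/-- `f` is vector `k`-monotone: for PSD `A`, `B` and `v` with `v vᵀ ⪯_k B`,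
`f(A + v vᵀ) ≥ f(A + B)`. -/
def VectorKMonotone {d : ℕ} (k : ℕ) (f : Matrix (Fin d) (Fin d) ℝ → ℝ) : Prop :=
  ∀ A B : Matrix (Fin d) (Fin d) ℝ, A.PosSemidef → B.PosSemidef →
    ∀ v : Fin d → ℝ, PrecK k (outer v) B → f (A + B) ≤ f (A + outer v)


lemma frob_eq_trace {d : ℕ} (X P : Matrix (Fin d) (Fin d) ℝ) :
    frob X P = Matrix.trace (Xᵀ * P) := by
  rw [frob, Matrix.trace]
  rw [Finset.sum_comm]
  refine Finset.sum_congr rfl fun j _ => ?_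
  simp [Matrix.diag, Matrix.mul_apply, Matrix.transpose_apply]

lemma frob_conj_diag {d : ℕ} (X U : Matrix (Fin d) (Fin d) ℝ) (g : Fin d → ℝ) :
    frob X (U * Matrix.diagonal g * Uᴴ) = ∑ l, (Uᴴ * Xᵀ * U) l l * g l := by
  rw [frob_eq_trace]
  have h1 : Xᵀ * (U * Matrix.diagonal g * Uᴴ) = (Xᵀ * U * Matrix.diagonal g) * Uᴴ := by
    simp only [Matrix.mul_assoc]
  rw [h1, Matrix.trace_mul_comm]
  have h2 : Uᴴ * (Xᵀ * U * Matrix.diagonal g) = (Uᴴ * Xᵀ * U) * Matrix.diagonal g := by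
    rw [← Matrix.mul_assoc, ← Matrix.mul_assoc]
  rw [h2, Matrix.trace]
  refine Finset.sum_congr rfl fun l _ => ?_
  simp [Matrix.diag, Matrix.mul_diagonal]

lemma outer_transpose {d : ℕ} (v : Fin d → ℝ) : (outer v)ᵀ = outer v := by
  ext i j
  simp [outer, Matrix.vecMulVec_apply, mul_comm]

lemma outer_posSemidef {d : ℕ} (v : Fin d → ℝ) : (outer v).PosSemidef := by
  have := Matrix.posSemidef_vecMulVec_self_star v
  simpa [outer, star_trivial] using this

lemma conj_outer {d : ℕ} (U : Matrix (Fin d) (Fin d) ℝ) (v : Fin d → ℝ) :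
    Uᴴ * outer v * U = Matrix.vecMulVec (fun l => ∑ i, v i * U i l) (fun l => ∑ i, v i * U i l) := by
  ext a b
  have hL : (Uᴴ * outer v * U) a b = ∑ i, ∑ j, (v i * U i a) * (v j * U j b) := by
    simp only [Matrix.mul_apply, outer, Matrix.vecMulVec_apply, Matrix.conjTranspose_apply,
      star_trivial, Finset.sum_mul]
    rw [Finset.sum_comm]
    exact Finset.sum_congr rfl fun i _ => Finset.sum_congr rfl fun j _ => by ring
  rw [hL, Matrix.vecMulVec_apply, Finset.sum_mul_sum]


variable {R : Type*} [CommRing R] {n : Type*} [Fintype n] [DecidableEq n]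

lemma det_piecewise_diagonal (f : n → R) (C : Matrix n n R) (S : Finset n) :
    Matrix.det (S.piecewise C (Matrix.diagonal f)) =
      (∏ i ∈ Sᶜ, f i) *
        Matrix.det (C.submatrix (fun i : {x // x ∈ S} => (i : n)) (fun j : {x // x ∈ S} => (j : n))) := by
  classical
  set M : Matrix n n R := S.piecewise C (Matrix.diagonal f) with hM
  let e : {x // x ∈ S} ⊕ {x // ¬ x ∈ S} ≃ n := Equiv.sumCompl (· ∈ S)
  have hdet : M.det = (M.submatrix e e).det := (Matrix.det_submatrix_equiv_self e M).symm
  have hblock : M.submatrix e e =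
      Matrix.fromBlocks
        (C.submatrix (fun i : {x // x ∈ S} => (i : n)) (fun j : {x // x ∈ S} => (j : n)))
        (M.submatrix (fun i : {x // x ∈ S} => (i : n)) (fun j : {x // ¬ x ∈ S} => (j : n)))
        0 (Matrix.diagonal (fun i : {x // ¬ x ∈ S} => f i)) := by
    ext i j
    cases i with
    | inl i =>
      cases j with
      | inl j => simp only [Matrix.submatrix_apply]; simp [M, e, Matrix.fromBlocks, Finset.piecewise, i.2]
      | inr j => simp only [Matrix.submatrix_apply]; simp [M, e, Matrix.fromBlocks]; rfl
    | inr i =>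
      cases j with
      | inl j =>
        have hij : (i : n) ≠ (j : n) := fun h => i.2 (h ▸ j.2)
        simp only [Matrix.submatrix_apply]; simp [M, e, Matrix.fromBlocks, Finset.piecewise, i.2, Matrix.diagonal, hij]
      | inr j =>
        have : ((i : n) = (j : n)) ↔ i = j := Subtype.coe_injective.eq_iff
        simp only [Matrix.submatrix_apply]; simp [M, e, Matrix.fromBlocks, Finset.piecewise, i.2, Matrix.diagonal, Subtype.ext_iff]
  have hprod : (∏ i ∈ Sᶜ, f i) = ∏ i : {x // ¬ x ∈ S}, f i := by
    rw [Finset.prod_subtype Sᶜ (fun x => Finset.mem_compl) f]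
  rw [hdet, hblock, Matrix.det_fromBlocks_zero₂₁, Matrix.det_diagonal, hprod, mul_comm]

lemma det_diagonal_add (f : n → R) (C : Matrix n n R) :
    Matrix.det (Matrix.diagonal f + C) =
      ∑ S ∈ Finset.powerset (Finset.univ : Finset n), (∏ i ∈ Sᶜ, f i) *
        Matrix.det (C.submatrix (fun i : {x // x ∈ S} => (i : n)) (fun j : {x // x ∈ S} => (j : n))) := by
  classical
  have h1 : Matrix.det (Matrix.diagonal f + C) =
      ∑ S : Finset n, Matrix.det (S.piecewise C (Matrix.diagonal f)) := by
    have := (Matrix.detRowAlternating :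
        (n → R) [⋀^n]→ₗ[R] R).toMultilinearMap.map_add_univ C (Matrix.diagonal f)
    have h2 : Matrix.diagonal f + C = (C : n → n → R) + (Matrix.diagonal f : n → n → R) := by
      rw [add_comm]
    rw [h2]; exact this
  rw [h1, show ((Finset.univ : Finset n).powerset) = (Finset.univ : Finset (Finset n)) by simp]
  exact Finset.sum_congr rfl fun S _ => det_piecewise_diagonal f C S

lemma charlike {d : ℕ} (M : Matrix (Fin d) (Fin d) ℝ) (t : ℝ) :
    Matrix.det (Matrix.diagonal (fun _ => t) + M) =
      ∑ j ∈ Finset.range (d + 1), t ^ (d - j) * detk j M := by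
  classical
  rw [det_diagonal_add]
  rw [Finset.powerset_card_disjiUnion]; erw [Finset.sum_disjiUnion, Finset.card_fin]
  refine Finset.sum_congr rfl fun j hj => ?_
  rw [detk, Finset.mul_sum]
  refine Finset.sum_congr rfl fun S hS => ?_
  have hcard : S.card = j := (Finset.mem_powersetCard.mp hS).2
  have : (Sᶜ : Finset (Fin d)).card = d - j := by
    rw [Finset.card_compl, hcard, Fintype.card_fin]
  rw [Finset.prod_const, this]

lemma detk_eq_of_charlike {d : ℕ} (M N : Matrix (Fin d) (Fin d) ℝ)
    (h : ∀ t : ℝ, Matrix.det (Matrix.diagonal (fun _ => t) + M)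
      = Matrix.det (Matrix.diagonal (fun _ => t) + N)) (k : ℕ) (hk : k ≤ d) :
    detk k M = detk k N := by
  classical
  let p : Polynomial ℝ := ∑ j ∈ Finset.range (d+1), Polynomial.C (detk j M) * Polynomial.X ^ (d - j)
  let q : Polynomial ℝ := ∑ j ∈ Finset.range (d+1), Polynomial.C (detk j N) * Polynomial.X ^ (d - j)
  have hpq : p = q := by
    apply Polynomial.funext
    intro t
    have hp : p.eval t = ∑ j ∈ Finset.range (d+1), t ^ (d - j) * detk j M := by
      simp only [p, Polynomial.eval_finset_sum, Polynomial.eval_mul, Polynomial.eval_C,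
        Polynomial.eval_pow, Polynomial.eval_X]
      exact Finset.sum_congr rfl fun j _ => mul_comm _ _
    have hq : q.eval t = ∑ j ∈ Finset.range (d+1), t ^ (d - j) * detk j N := by
      simp only [q, Polynomial.eval_finset_sum, Polynomial.eval_mul, Polynomial.eval_C,
        Polynomial.eval_pow, Polynomial.eval_X]
      exact Finset.sum_congr rfl fun j _ => mul_comm _ _
    rw [hp, hq, ← charlike, ← charlike, h]
  have hcoeff : ∀ (a : ℕ → ℝ),
      (∑ j ∈ Finset.range (d+1), Polynomial.C (a j) * Polynomial.X ^ (d - j)).coeff (d - k)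
        = a k := by
    intro a
    rw [Polynomial.finset_sum_coeff]
    rw [Finset.sum_eq_single k]
    · simp [Polynomial.coeff_C_mul, Polynomial.coeff_X_pow]
    · intro j hj hjk
      have hj' : j ≤ d := by simpa using Nat.lt_succ_iff.mp (Finset.mem_range.mp hj)
      have : d - j ≠ d - k := by omega
      simp only [Polynomial.coeff_C_mul, Polynomial.coeff_X_pow, if_neg (Ne.symm this), mul_zero]
    · intro hk'
      exact absurd (Finset.mem_range.mpr (by omega)) hk'
  have := congrArg (fun r => r.coeff (d - k)) hpq
  simpa [p, q, hcoeff] using this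

lemma detk_conj {d : ℕ} (V M : Matrix (Fin d) (Fin d) ℝ)
    (h1 : V * Vᴴ = 1) (k : ℕ) (hk : k ≤ d) :
    detk k (V * M * Vᴴ) = detk k M := by
  apply detk_eq_of_charlike _ _ _ k hk
  intro t
  have hdiag : Matrix.diagonal (fun _ : Fin d => t) = (t • 1 : Matrix (Fin d) (Fin d) ℝ) := by
    rw [Matrix.smul_one_eq_diagonal]
  have key : Matrix.diagonal (fun _ : Fin d => t) + V * M * Vᴴ
      = V * (Matrix.diagonal (fun _ : Fin d => t) + M) * Vᴴ := by
    rw [Matrix.mul_add, Matrix.add_mul, hdiag]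
    congr 1
    rw [Matrix.mul_smul, Matrix.mul_one, Matrix.smul_mul, h1]
  rw [key, Matrix.det_mul, Matrix.det_mul, mul_comm (V.det), mul_assoc, ← Matrix.det_mul, h1]
  simp

/-- The `j`-th layer in the expansion of the `T×T` minor of `diagonal lam + C`. -/
def Fterm {d : ℕ} (lam : Fin d → ℝ) (C : Matrix (Fin d) (Fin d) ℝ) (T : Finset (Fin d))
    (j : ℕ) : ℝ :=
  ∑ W ∈ Finset.powersetCard j (Finset.univ : Finset {x // x ∈ T}),
    (∏ x ∈ Wᶜ, lam (x : Fin d)) *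
      Matrix.det (C.submatrix (fun a : {y // y ∈ W} => ((a : {x // x ∈ T}) : Fin d))
        (fun a : {y // y ∈ W} => ((a : {x // x ∈ T}) : Fin d)))

lemma expand_T {d : ℕ} (lam : Fin d → ℝ) (C : Matrix (Fin d) (Fin d) ℝ) (T : Finset (Fin d)) :
    Matrix.det ((Matrix.diagonal lam + C).submatrix
        (fun i : {x // x ∈ T} => (i : Fin d)) (fun j : {x // x ∈ T} => (j : Fin d)))
      = ∑ j ∈ Finset.range (T.card + 1), Fterm lam C T j := by
  classical
  have h1 : (Matrix.diagonal lam + C).submatrix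
        (fun i : {x // x ∈ T} => (i : Fin d)) (fun j : {x // x ∈ T} => (j : Fin d))
      = Matrix.diagonal (fun i : {x // x ∈ T} => lam i)
        + C.submatrix (fun i : {x // x ∈ T} => (i : Fin d)) (fun j : {x // x ∈ T} => (j : Fin d)) := by
    ext i j
    simp [Matrix.diagonal_apply]
  rw [h1, det_diagonal_add]
  have h2 : (Finset.univ : Finset {x // x ∈ T}).card = T.card := by
    rw [Finset.card_univ, Fintype.card_coe]
  rw [Finset.powerset_card_disjiUnion]; erw [Finset.sum_disjiUnion, h2]
  refine Finset.sum_congr rfl fun j _ => ?_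
  refine Finset.sum_congr rfl fun W _ => ?_
  rw [Matrix.submatrix_submatrix]
  rfl

lemma Fterm_zero {d : ℕ} (lam : Fin d → ℝ) (C : Matrix (Fin d) (Fin d) ℝ) (T : Finset (Fin d)) :
    Fterm lam C T 0 = ∏ i ∈ T, lam i := by
  classical
  rw [Fterm, Finset.powersetCard_zero, Finset.sum_singleton]
  have h1 : Matrix.det (C.submatrix
      (fun a : {y // y ∈ (∅ : Finset {x // x ∈ T})} => ((a : {x // x ∈ T}) : Fin d))
      (fun a : {y // y ∈ (∅ : Finset {x // x ∈ T})} => ((a : {x // x ∈ T}) : Fin d))) = 1 := by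
    have : IsEmpty {y // y ∈ (∅ : Finset {x // x ∈ T})} := by
      constructor; rintro ⟨y, hy⟩; exact absurd hy (Finset.notMem_empty y)
    exact Matrix.det_isEmpty
  rw [h1, mul_one, Finset.compl_empty]
  exact Finset.prod_coe_sort T lam

lemma Fterm_one {d : ℕ} (lam : Fin d → ℝ) (C : Matrix (Fin d) (Fin d) ℝ) (T : Finset (Fin d)) :
    Fterm lam C T 1 = ∑ i ∈ T, (∏ j ∈ T.erase i, lam j) * C i i := by
  classical
  rw [Fterm, Finset.powersetCard_one, Finset.sum_map, ← Finset.sum_coe_sort T]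
  simp only [Function.Embedding.coeFn_mk]
  refine Finset.sum_congr rfl fun i _ => ?_
  have hdet : Matrix.det (C.submatrix
      (fun a : {y // y ∈ ({i} : Finset {x // x ∈ T})} => ((a : {x // x ∈ T}) : Fin d))
      (fun a : {y // y ∈ ({i} : Finset {x // x ∈ T})} => ((a : {x // x ∈ T}) : Fin d)))
      = C (i : Fin d) (i : Fin d) := by
    have hcard : Fintype.card {y // y ∈ ({i} : Finset {x // x ∈ T})} = 1 := by
      rw [Fintype.card_coe, Finset.card_singleton]
    rw [Matrix.det_eq_elem_of_card_eq_one hcard ⟨i, Finset.mem_singleton_self i⟩]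
    rfl
  rw [hdet]
  congr 1
  -- ∏ x ∈ ({i})ᶜ, lam ↑x = ∏ j ∈ T.erase ↑i, lam j
  refine Finset.prod_nbij' (fun x => (x : Fin d))
    (fun j => if h : j ∈ T then (⟨j, h⟩ : {x // x ∈ T}) else i) ?_ ?_ ?_ ?_ ?_
  · intro a ha
    rw [Finset.mem_erase]
    refine ⟨?_, a.2⟩
    intro h
    exact (Finset.mem_compl.mp ha) (Finset.mem_singleton.mpr (Subtype.ext h))
  · intro j hj
    have hjT : j ∈ T := Finset.mem_of_mem_erase hj
    simp only [dif_pos hjT]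
    rw [Finset.mem_compl, Finset.mem_singleton]
    intro h
    exact (Finset.mem_erase.mp hj).1 (by simpa [Subtype.ext_iff] using h)
  · intro a _
    simp only [dif_pos a.2]
  · intro j hj
    simp only [dif_pos (Finset.mem_of_mem_erase hj)]
  · intro a _
    rfl

lemma psd_det_nonneg {m : Type*} [Fintype m] [DecidableEq m] {M : Matrix m m ℝ}
    (hM : M.PosSemidef) : 0 ≤ M.det := by
  rw [hM.isHermitian.det_eq_prod_eigenvalues]
  exact Finset.prod_nonneg fun i _ => hM.eigenvalues_nonneg i

lemma Fterm_nonneg {d : ℕ} {lam : Fin d → ℝ} (hlam : ∀ i, 0 ≤ lam i)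
    {C : Matrix (Fin d) (Fin d) ℝ} (hC : C.PosSemidef) (T : Finset (Fin d)) (j : ℕ) :
    0 ≤ Fterm lam C T j := by
  classical
  refine Finset.sum_nonneg fun W _ => mul_nonneg (Finset.prod_nonneg fun x _ => hlam _) ?_
  exact psd_det_nonneg (hC.submatrix _)

lemma Fterm_vecMulVec {d : ℕ} (lam : Fin d → ℝ) (w : Fin d → ℝ) (T : Finset (Fin d))
    {j : ℕ} (hj : 2 ≤ j) :
    Fterm lam (Matrix.vecMulVec w w) T j = 0 := by
  classical
  refine Finset.sum_eq_zero fun W hW => ?_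
  have hcard : Fintype.card {y // y ∈ W} = j := by
    rw [Fintype.card_coe, (Finset.mem_powersetCard.mp hW).2]
  have h2 : 1 < Fintype.card {y // y ∈ W} := by omega
  obtain ⟨a, b, hab⟩ := Fintype.exists_pair_of_one_lt_card h2
  have hsub : (Matrix.vecMulVec w w).submatrix
      (fun a : {y // y ∈ W} => ((a : {x // x ∈ T}) : Fin d))
      (fun a : {y // y ∈ W} => ((a : {x // x ∈ T}) : Fin d))
      = Matrix.vecMulVec (fun a : {y // y ∈ W} => w ((a : {x // x ∈ T}) : Fin d))
          (fun a : {y // y ∈ W} => w ((a : {x // x ∈ T}) : Fin d)) := by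
    ext x y
    simp [Matrix.vecMulVec_apply]
  rw [hsub]
  have hzero : Matrix.det (Matrix.vecMulVec
      (fun a : {y // y ∈ W} => w ((a : {x // x ∈ T}) : Fin d))
      (fun a : {y // y ∈ W} => w ((a : {x // x ∈ T}) : Fin d))) = 0 := by
    set u := fun a : {y // y ∈ W} => w ((a : {x // x ∈ T}) : Fin d)
    have hfac : Matrix.vecMulVec u u
        = Matrix.diagonal u * Matrix.of (fun _ x : {y // y ∈ W} => u x) := by
      ext x y
      simp [Matrix.vecMulVec_apply, Matrix.mul_apply, Matrix.diagonal_apply, Finset.sum_ite_eq]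
    rw [hfac, Matrix.det_mul]
    have : Matrix.det (Matrix.of (fun _ x : {y // y ∈ W} => u x)) = 0 :=
      Matrix.det_zero_of_row_eq hab rfl
    rw [this, mul_zero]
  rw [hzero, mul_zero]

lemma detk_diagonal {d k : ℕ} (lam : Fin d → ℝ) :
    detk k (Matrix.diagonal lam)
      = ∑ T ∈ Finset.powersetCard k (Finset.univ : Finset (Fin d)), ∏ i ∈ T, lam i := by
  classical
  refine Finset.sum_congr rfl fun T _ => ?_
  have h1 : (Matrix.diagonal lam).submatrix
      (fun i : {x // x ∈ T} => (i : Fin d)) (fun j : {x // x ∈ T} => (j : Fin d))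
      = Matrix.diagonal (fun i : {x // x ∈ T} => lam i) := by
    ext i j
    simp [Matrix.diagonal_apply]
  rw [h1, Matrix.det_diagonal]
  exact Finset.prod_coe_sort T lam

lemma sum_range_split {k : ℕ} (hk : 1 ≤ k) (F : ℕ → ℝ) :
    ∑ j ∈ Finset.range (k + 1), F j = F 0 + F 1 + ∑ j ∈ Finset.Ico 2 (k + 1), F j := by
  have h : Finset.range (k+1) = insert 0 (insert 1 (Finset.Ico 2 (k+1))) := by
    ext a
    simp [Finset.mem_range, Finset.mem_Ico, Finset.mem_insert]
    omega
  rw [h, Finset.sum_insert, Finset.sum_insert, add_assoc]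
  · simp [Finset.mem_Ico]
  · simp [Finset.mem_Ico, Finset.mem_insert]

lemma rearrange {d k : ℕ} (hk : 1 ≤ k) (lam : Fin d → ℝ) (x : Fin d → ℝ) :
    ∑ T ∈ Finset.powersetCard k (Finset.univ : Finset (Fin d)),
        ∑ i ∈ T, (∏ j ∈ T.erase i, lam j) * x i
      = ∑ S ∈ Finset.powersetCard (k-1) (Finset.univ : Finset (Fin d)),
          (∏ j ∈ S, lam j) * ∑ i ∈ Sᶜ, x i := by
  classical
  rw [← Finset.sum_sigma (Finset.powersetCard k (Finset.univ : Finset (Fin d))) (fun T => T)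
      (fun p => (∏ j ∈ p.1.erase p.2, lam j) * x p.2)]
  rw [show (∑ S ∈ Finset.powersetCard (k-1) (Finset.univ : Finset (Fin d)),
          (∏ j ∈ S, lam j) * ∑ i ∈ Sᶜ, x i)
      = ∑ S ∈ Finset.powersetCard (k-1) (Finset.univ : Finset (Fin d)),
          ∑ i ∈ Sᶜ, (∏ j ∈ S, lam j) * x i from
    Finset.sum_congr rfl fun S _ => Finset.mul_sum _ _ _]
  rw [← Finset.sum_sigma (Finset.powersetCard (k-1) (Finset.univ : Finset (Fin d))) (fun S => Sᶜ)
      (fun p => (∏ j ∈ p.1, lam j) * x p.2)]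
  refine Finset.sum_nbij' (fun p => ⟨p.1.erase p.2, p.2⟩) (fun p => ⟨insert p.2 p.1, p.2⟩)
    ?_ ?_ ?_ ?_ ?_
  · rintro ⟨T, i⟩ hp
    rw [Finset.mem_sigma] at hp ⊢
    obtain ⟨hT, hi⟩ := hp
    have hTk := (Finset.mem_powersetCard.mp hT).2
    refine ⟨Finset.mem_powersetCard.mpr ⟨Finset.subset_univ _, ?_⟩, ?_⟩
    · rw [Finset.card_erase_of_mem hi, hTk]
    · rw [Finset.mem_compl]
      exact Finset.notMem_erase i T
  · rintro ⟨S, i⟩ hp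
    rw [Finset.mem_sigma] at hp ⊢
    obtain ⟨hS, hi⟩ := hp
    have hSk := (Finset.mem_powersetCard.mp hS).2
    have hiS : i ∉ S := Finset.mem_compl.mp hi
    refine ⟨Finset.mem_powersetCard.mpr ⟨Finset.subset_univ _, ?_⟩, Finset.mem_insert_self i S⟩
    rw [Finset.card_insert_of_notMem hiS, hSk]
    omega
  · rintro ⟨T, i⟩ hp
    rw [Finset.mem_sigma] at hp
    show (⟨insert i (T.erase i), i⟩ : Σ _ : Finset (Fin d), Fin d) = ⟨T, i⟩
    rw [Finset.insert_erase hp.2]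
  · rintro ⟨S, i⟩ hp
    rw [Finset.mem_sigma] at hp
    show (⟨(insert i S).erase i, i⟩ : Σ _ : Finset (Fin d), Fin d) = ⟨S, i⟩
    rw [Finset.erase_insert (Finset.mem_compl.mp hp.2)]
  · rintro ⟨T, i⟩ _
    rfl

lemma detk_expand {d k : ℕ} (hk1 : 1 ≤ k) (lam : Fin d → ℝ) (C : Matrix (Fin d) (Fin d) ℝ) :
    detk k (Matrix.diagonal lam + C)
      = detk k (Matrix.diagonal lam)
        + (∑ S ∈ Finset.powersetCard (k-1) (Finset.univ : Finset (Fin d)),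
            (∏ j ∈ S, lam j) * ∑ i ∈ Sᶜ, C i i)
        + ∑ T ∈ Finset.powersetCard k (Finset.univ : Finset (Fin d)),
            ∑ j ∈ Finset.Ico 2 (k+1), Fterm lam C T j := by
  classical
  have hper : ∀ T ∈ Finset.powersetCard k (Finset.univ : Finset (Fin d)),
      Matrix.det ((Matrix.diagonal lam + C).submatrix
        (fun i : {x // x ∈ T} => (i : Fin d)) (fun j : {x // x ∈ T} => (j : Fin d)))
      = (∏ i ∈ T, lam i) + (∑ i ∈ T, (∏ j ∈ T.erase i, lam j) * C i i)
          + ∑ j ∈ Finset.Ico 2 (k+1), Fterm lam C T j := by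
    intro T hT
    have hTk : T.card = k := (Finset.mem_powersetCard.mp hT).2
    rw [expand_T, hTk, sum_range_split hk1, Fterm_zero, Fterm_one]
  rw [detk, Finset.sum_congr rfl hper, Finset.sum_add_distrib, Finset.sum_add_distrib,
    detk_diagonal, rearrange hk1]

lemma lemA {d k : ℕ} (hk1 : 1 ≤ k) (lam : Fin d → ℝ) (w : Fin d → ℝ) :
    detk k (Matrix.diagonal lam + Matrix.vecMulVec w w)
      = detk k (Matrix.diagonal lam)
        + ∑ S ∈ Finset.powersetCard (k-1) (Finset.univ : Finset (Fin d)),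
            (∏ j ∈ S, lam j) * ∑ i ∈ Sᶜ, w i * w i := by
  rw [detk_expand hk1]
  have h1 : ∑ T ∈ Finset.powersetCard k (Finset.univ : Finset (Fin d)),
      ∑ j ∈ Finset.Ico 2 (k+1), Fterm lam (Matrix.vecMulVec w w) T j = 0 := by
    refine Finset.sum_eq_zero fun T _ => Finset.sum_eq_zero fun j hj => ?_
    exact Fterm_vecMulVec lam w T (Finset.mem_Ico.mp hj).1
  rw [h1, add_zero]
  simp only [Matrix.vecMulVec_apply]

lemma lemB {d k : ℕ} (hk1 : 1 ≤ k) {lam : Fin d → ℝ} (hlam : ∀ i, 0 ≤ lam i)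
    {C : Matrix (Fin d) (Fin d) ℝ} (hC : C.PosSemidef) :
    detk k (Matrix.diagonal lam)
        + (∑ S ∈ Finset.powersetCard (k-1) (Finset.univ : Finset (Fin d)),
            (∏ j ∈ S, lam j) * ∑ i ∈ Sᶜ, C i i)
      ≤ detk k (Matrix.diagonal lam + C) := by
  rw [detk_expand hk1]
  have : 0 ≤ ∑ T ∈ Finset.powersetCard k (Finset.univ : Finset (Fin d)),
      ∑ j ∈ Finset.Ico 2 (k+1), Fterm lam C T j :=
    Finset.sum_nonneg fun T _ => Finset.sum_nonneg fun j _ => Fterm_nonneg hlam hC T j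
  linarith

lemma detk_key {d : ℕ} (k : ℕ) (hk1 : 1 ≤ k) (hkd : k ≤ d)
    (A B : Matrix (Fin d) (Fin d) ℝ) (hA : A.PosSemidef) (hB : B.PosSemidef)
    (v : Fin d → ℝ) (hvB : PrecK k (outer v) B) :
    detk k (A + outer v) ≤ detk k (A + B) := by
  classical
  have hH : A.IsHermitian := hA.isHermitian
  set U : Matrix (Fin d) (Fin d) ℝ := (hH.eigenvectorUnitary : Matrix (Fin d) (Fin d) ℝ) with hU
  have hU1 : U * Uᴴ = 1 := by
    rw [← Matrix.star_eq_conjTranspose]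
    exact Matrix.mem_unitaryGroup_iff.mp hH.eigenvectorUnitary.2
  have hU2 : Uᴴ * U = 1 := by
    rw [← Matrix.star_eq_conjTranspose]
    exact Matrix.mem_unitaryGroup_iff'.mp hH.eigenvectorUnitary.2
  set lam : Fin d → ℝ := hH.eigenvalues with hlamdef
  have hlam : ∀ i, 0 ≤ lam i := fun i => hA.eigenvalues_nonneg i
  have hAdiag : Uᴴ * A * U = Matrix.diagonal lam := by
    have := hH.spectral_theorem
    rw [Unitary.conjStarAlgAut_apply] at this
    rw [← hU, Matrix.star_eq_conjTranspose] at this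
    have hd : (RCLike.ofReal ∘ hH.eigenvalues : Fin d → ℝ) = lam := rfl
    rw [hd] at this
    conv_lhs => rw [this]
    simp only [Matrix.mul_assoc]
    rw [hU2, Matrix.mul_one, ← Matrix.mul_assoc, hU2, Matrix.one_mul]
  set w : Fin d → ℝ := fun l => ∑ i, v i * U i l with hwdef
  set C : Matrix (Fin d) (Fin d) ℝ := Uᴴ * B * U with hCdef
  have hCpsd : C.PosSemidef := by
    have := hB.conjTranspose_mul_mul_same U
    simpa [hCdef] using this
  -- conjugated matrices
  have h1 : Uᴴ * (A + outer v) * U = Matrix.diagonal lam + Matrix.vecMulVec w w := by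
    rw [Matrix.mul_add, Matrix.add_mul, hAdiag, conj_outer]
  have h2 : Uᴴ * (A + B) * U = Matrix.diagonal lam + C := by
    rw [Matrix.mul_add, Matrix.add_mul, hAdiag]
  -- invariance of detk under conjugation by Uᴴ
  have hconj : ∀ M : Matrix (Fin d) (Fin d) ℝ, detk k (Uᴴ * M * U) = detk k M := by
    intro M
    have := detk_conj Uᴴ M (by rwa [Matrix.conjTranspose_conjTranspose]) k hkd
    rwa [Matrix.conjTranspose_conjTranspose] at this
  -- the projection inequality
  have hproj : ∀ S ∈ Finset.powersetCard (k-1) (Finset.univ : Finset (Fin d)),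
      (∑ i ∈ Sᶜ, w i * w i) ≤ ∑ i ∈ Sᶜ, C i i := by
    intro S hS
    have hScard : S.card = k - 1 := (Finset.mem_powersetCard.mp hS).2
    set g : Fin d → ℝ := fun l => if l ∈ S then 0 else 1 with hgdef
    set P : Matrix (Fin d) (Fin d) ℝ := U * Matrix.diagonal g * Uᴴ with hPdef
    have hgg : ∀ l, g l * g l = g l := by
      intro l; by_cases h : l ∈ S <;> simp [hgdef, h]
    have hPherm : P.IsHermitian := by
      rw [Matrix.IsHermitian, hPdef, Matrix.conjTranspose_mul, Matrix.conjTranspose_mul,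
        Matrix.conjTranspose_conjTranspose, Matrix.diagonal_conjTranspose]
      simp [Matrix.mul_assoc]
    have hPidem : P * P = P := by
      rw [hPdef]
      calc U * Matrix.diagonal g * Uᴴ * (U * Matrix.diagonal g * Uᴴ)
          = U * Matrix.diagonal g * (Uᴴ * U) * Matrix.diagonal g * Uᴴ := by
            simp only [Matrix.mul_assoc]
        _ = U * (Matrix.diagonal g * Matrix.diagonal g) * Uᴴ := by
            rw [hU2]; simp only [Matrix.mul_one, Matrix.mul_assoc]
        _ = U * Matrix.diagonal g * Uᴴ := by
            rw [Matrix.diagonal_mul_diagonal,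
              show (fun i => g i * g i) = g from funext hgg]
    have hUdet : IsUnit U.det := by
      refine IsUnit.of_mul_eq_one (Uᴴ.det) ?_
      rw [← Matrix.det_mul, hU1, Matrix.det_one]
    have hUHdet : IsUnit (Uᴴ.det) := by
      refine IsUnit.of_mul_eq_one (U.det) ?_
      rw [← Matrix.det_mul, hU2, Matrix.det_one]
    have hPrank : P.rank = d - k + 1 := by
      rw [hPdef, Matrix.rank_mul_eq_left_of_isUnit_det _ _ hUHdet,
        Matrix.rank_mul_eq_right_of_isUnit_det _ _ hUdet, Matrix.rank_diagonal]
      have hcount : Fintype.card {i // g i ≠ 0} = (Sᶜ).card := by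
        rw [Fintype.card_subtype]
        congr 1
        ext l
        by_cases h : l ∈ S <;> simp [hgdef, h]
      rw [hcount, Finset.card_compl, hScard, Fintype.card_fin]
      omega
    have := hvB P hPherm hPidem hPrank
    have hfrob1 : frob (outer v) P = ∑ i ∈ Sᶜ, w i * w i := by
      rw [hPdef, frob_conj_diag, outer_transpose]
      have hdiagentry : ∀ l, (Uᴴ * outer v * U) l l = w l * w l := by
        intro l
        rw [conj_outer, Matrix.vecMulVec_apply]
      calc ∑ l, (Uᴴ * outer v * U) l l * g l = ∑ l, if l ∈ Sᶜ then w l * w l else 0 := by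
            refine Finset.sum_congr rfl fun l _ => ?_
            rw [hdiagentry]
            by_cases h : l ∈ S <;> simp [hgdef, h]
        _ = ∑ i ∈ Sᶜ, w i * w i := by
            rw [Finset.sum_ite_mem, Finset.univ_inter]
    have hfrob2 : frob B P = ∑ i ∈ Sᶜ, C i i := by
      have hBt : Bᵀ = B := by
        rw [← Matrix.conjTranspose_eq_transpose_of_trivial]
        exact hB.isHermitian
      rw [hPdef, frob_conj_diag, hBt]
      calc ∑ l, (Uᴴ * B * U) l l * g l = ∑ l, if l ∈ Sᶜ then C l l else 0 := by
            refine Finset.sum_congr rfl fun l _ => ?_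
            by_cases h : l ∈ S <;> simp [hgdef, hCdef, h]
        _ = ∑ i ∈ Sᶜ, C i i := by
            rw [Finset.sum_ite_mem, Finset.univ_inter]
    rw [hfrob1, hfrob2] at this
    exact this
  calc detk k (A + outer v)
      = detk k (Matrix.diagonal lam + Matrix.vecMulVec w w) := by rw [← hconj (A + outer v), h1]
    _ = detk k (Matrix.diagonal lam)
        + ∑ S ∈ Finset.powersetCard (k-1) (Finset.univ : Finset (Fin d)),
            (∏ j ∈ S, lam j) * ∑ i ∈ Sᶜ, w i * w i := lemA hk1 lam w
    _ ≤ detk k (Matrix.diagonal lam)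
        + ∑ S ∈ Finset.powersetCard (k-1) (Finset.univ : Finset (Fin d)),
            (∏ j ∈ S, lam j) * ∑ i ∈ Sᶜ, C i i := by
        refine add_le_add_right (Finset.sum_le_sum fun S hS => ?_) _
        exact mul_le_mul_of_nonneg_left (hproj S hS)
          (Finset.prod_nonneg fun j _ => hlam j)
    _ ≤ detk k (Matrix.diagonal lam + C) := lemB hk1 hlam hCpsd
    _ = detk k (A + B) := by rw [← h2, hconj]

lemma detk_nonneg {d k : ℕ} {M : Matrix (Fin d) (Fin d) ℝ} (hM : M.PosSemidef) :
    0 ≤ detk k M :=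
  Finset.sum_nonneg fun S _ => psd_det_nonneg (hM.submatrix _)

theorem detk_monotone_and_neg_detk_root_vector_k_monotone
    {d : ℕ} (k : ℕ) (hk1 : 1 ≤ k) (hkd : k ≤ d)
    (A B : Matrix (Fin d) (Fin d) ℝ) (hA : A.PosSemidef) (hB : B.PosSemidef)
    (v : Fin d → ℝ) (hvB : PrecK k (outer v) B) :
    detk k (A + outer v) ≤ detk k (A + B) ∧
      VectorKMonotone (d := d) k (fun C => -(detk k C ^ ((1:ℝ) / k))) := by
  refine ⟨detk_key k hk1 hkd A B hA hB v hvB, ?_⟩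
  intro A' B' hA' hB' v' hv'
  have hle := detk_key k hk1 hkd A' B' hA' hB' v' hv'
  have h0 : 0 ≤ detk k (A' + outer v') := detk_nonneg (hA'.add (outer_posSemidef v'))
  show -(detk k (A' + B') ^ ((1:ℝ) / k)) ≤ -(detk k (A' + outer v') ^ ((1:ℝ) / k))
  exact neg_le_neg (Real.rpow_le_rpow h0 hle (by positivity))
end
end

section
/- For any vectors v_1, …, v_n ∈ ℝ^d and any integer 1 ≤ k ≤ d, det_k( Σ_{i=1}^{n} v_i v_iᵀ ) = Σ_{S ⊆ {1,…,n}, |S| = k} det_k( Σ_{i∈S} v_i v_iᵀ ). -/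
/-!
STATEMENT 15: For any vectors v_1, …, v_n ∈ ℝ^d and any integer 1 ≤ k ≤ d,
det_k( Σ_{i=1}^{n} v_i v_iᵀ ) = Σ_{S ⊆ {1,…,n}, |S| = k} det_k( Σ_{i∈S} v_i v_iᵀ ).
-/

open Matrix Finset

noncomputable section

lemma expand_det {d n : ℕ} (v : Fin n → (Fin d → ℝ)) (S : Finset (Fin d))
    (A : Finset (Fin n)) :
    ((∑ i ∈ A, outer (v i)).submatrix (fun i : {x // x ∈ S} => (i : Fin d))
      (fun j : {x // x ∈ S} => (j : Fin d))).det
    = ∑ r ∈ (Fintype.piFinset fun _ : {x // x ∈ S} => A).filter Function.Injective,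
        (∏ s : {x // x ∈ S}, v (r s) (s : Fin d)) *
          (Matrix.of fun s t : {x // x ∈ S} => v (r s) (t : Fin d)).det := by
  have hM : ((∑ i ∈ A, outer (v i)).submatrix (fun i : {x // x ∈ S} => (i : Fin d))
      (fun j : {x // x ∈ S} => (j : Fin d)))
      = Matrix.of (fun s : {x // x ∈ S} =>
          ∑ i ∈ A, v i (s : Fin d) • (fun t : {x // x ∈ S} => v i (t : Fin d))) := by
    ext s t
    simp [outer, Matrix.vecMulVec_apply, Matrix.sum_apply, Finset.sum_apply]
  rw [hM]
  show (Matrix.detRowAlternating (R := ℝ)).toMultilinearMap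
      (fun s : {x // x ∈ S} =>
        ∑ i ∈ A, v i (s : Fin d) • (fun t : {x // x ∈ S} => v i (t : Fin d))) = _
  rw [(Matrix.detRowAlternating (R := ℝ) (n := {x // x ∈ S})).toMultilinearMap.map_sum_finset
    (g := fun s i => v i (s : Fin d) • (fun t : {x // x ∈ S} => v i (t : Fin d)))
    (A := fun _ => A)]
  rw [← Finset.sum_filter_of_ne (p := Function.Injective)]
  · apply Finset.sum_congr rfl
    intro r hr
    rw [MultilinearMap.map_smul_univ]
    rfl
  · intro r hr hne
    by_contra hinj
    apply hne
    rw [MultilinearMap.map_smul_univ]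
    obtain ⟨s₁, s₂, heq, hss⟩ := Function.not_injective_iff.mp hinj
    have : (Matrix.detRowAlternating (R := ℝ) (n := {x // x ∈ S})).toMultilinearMap
        (fun s => (fun t : {x // x ∈ S} => v (r s) (t : Fin d))) = 0 := by
      exact (Matrix.detRowAlternating).map_eq_zero_of_eq _ (by rw [heq]) hss
    rw [this, smul_zero]

lemma key_det {d n k : ℕ} (v : Fin n → (Fin d → ℝ)) (S : Finset (Fin d))
    (hS : S.card = k) (A : Finset (Fin n)) :
    ((∑ i ∈ A, outer (v i)).submatrix (fun i : {x // x ∈ S} => (i : Fin d))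
      (fun j : {x // x ∈ S} => (j : Fin d))).det
    = ∑ T ∈ A.powersetCard k,
      ((∑ i ∈ T, outer (v i)).submatrix (fun i : {x // x ∈ S} => (i : Fin d))
        (fun j : {x // x ∈ S} => (j : Fin d))).det := by
  have hcard : Fintype.card {x // x ∈ S} = k := by simp [hS]
  rw [expand_det]
  rw [← Finset.sum_fiberwise_of_maps_to (g := fun r : {x // x ∈ S} → Fin n =>
      Finset.image r Finset.univ)
    (t := A.powersetCard k) ?_]
  · apply Finset.sum_congr rfl
    intro T hT
    rw [expand_det]
    apply Finset.sum_congr _ (fun _ _ => rfl)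
    obtain ⟨hTA, hTk⟩ := Finset.mem_powersetCard.mp hT
    ext r
    simp only [Finset.mem_filter, Fintype.mem_piFinset]
    constructor
    · rintro ⟨⟨hrA, hinj⟩, him⟩
      refine ⟨fun s => ?_, hinj⟩
      rw [← him]; exact Finset.mem_image_of_mem r (Finset.mem_univ s)
    · rintro ⟨hrT, hinj⟩
      refine ⟨⟨fun s => hTA (hrT s), hinj⟩, ?_⟩
      apply Finset.eq_of_subset_of_card_le
      · intro x hx
        obtain ⟨s, _, rfl⟩ := Finset.mem_image.mp hx
        exact hrT s
      · rw [Finset.card_image_of_injective _ hinj, Finset.card_univ, hcard, hTk]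
  · intro r hr
    obtain ⟨hrA, hinj⟩ := Finset.mem_filter.mp hr
    rw [Fintype.mem_piFinset] at hrA
    rw [Finset.mem_powersetCard]
    constructor
    · intro x hx
      obtain ⟨s, _, rfl⟩ := Finset.mem_image.mp hx
      exact hrA s
    · rw [Finset.card_image_of_injective _ hinj, Finset.card_univ, hcard]

theorem detk_sum_outer_eq_sum_detk_subsets
    {d : ℕ} (n k : ℕ) (hk1 : 1 ≤ k) (hkd : k ≤ d) (v : Fin n → (Fin d → ℝ)) :
    detk k (∑ i, outer (v i)) =
      ∑ S ∈ Finset.powersetCard k (Finset.univ : Finset (Fin n)),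
        detk k (∑ i ∈ S, outer (v i)) := by
  unfold detk
  rw [Finset.sum_comm]
  apply Finset.sum_congr rfl
  intro S hS
  have hSk : S.card = k := (Finset.mem_powersetCard.mp hS).2
  exact key_det v S hSk Finset.univ
end
end
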